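/- Let n be a positive integer and let x, z be n×n complex matrices such that I − x xᴴ and I − xᴴ x are (Hermitian) positive definite and I + z xᴴ is invertible. Then the matrix I + (I − x xᴴ)^{1/2} z (I − xᴴ x)^{−1/2} xᴴ is invertible and (I + (I − x xᴴ)^{1/2} z (I − xᴴ x)^{−1/2} xᴴ)^{−1} = (I − x xᴴ)^{1/2} (I + z xᴴ)^{−1} (I − x xᴴ)^{−1/2}. -/

import Mathlib

open Matrix
open scoped ComplexOrder

/-- The square root of a positive semidefinite matrix, as defined in the older Mathlib
(`Matrix.PosSemidef.sqrt`, since removed). -/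
noncomputable def Matrix.PosSemidef.sqrt {n 𝕜 : Type*} [Fintype n] [DecidableEq n] [RCLike 𝕜]
    {A : Matrix n n 𝕜} (hA : A.PosSemidef) : Matrix n n 𝕜 :=
  hA.1.eigenvectorUnitary.1 * diagonal ((↑) ∘ (√·) ∘ hA.1.eigenvalues) *
  (star hA.1.eigenvectorUnitary : Matrix n n 𝕜)

lemma Matrix.PosSemidef.sqrt_mul_self {m : ℕ} {A : Matrix (Fin m) (Fin m) ℂ}
    (hA : A.PosSemidef) : hA.sqrt * hA.sqrt = A := by
  have hU' : star (hA.1.eigenvectorUnitary : Matrix (Fin m) (Fin m) ℂ) *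
      (hA.1.eigenvectorUnitary : Matrix (Fin m) (Fin m) ℂ) = 1 :=
    (Matrix.mem_unitaryGroup_iff').mp hA.1.eigenvectorUnitary.2
  have hspec : A = (hA.1.eigenvectorUnitary : Matrix (Fin m) (Fin m) ℂ) *
      diagonal (RCLike.ofReal ∘ hA.1.eigenvalues) *
      star (hA.1.eigenvectorUnitary : Matrix (Fin m) (Fin m) ℂ) := hA.1.spectral_theorem
  unfold Matrix.PosSemidef.sqrt
  conv_rhs => rw [hspec]
  simp only [mul_assoc]
  rw [← mul_assoc (star _) (hA.1.eigenvectorUnitary : Matrix (Fin m) (Fin m) ℂ), hU', one_mul,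
    ← mul_assoc (diagonal _), diagonal_mul_diagonal]
  refine congrArg (_ * ·) (congrArg (· * _) (congrArg diagonal (funext fun i => ?_)))
  simp [← Complex.ofReal_mul, Real.mul_self_sqrt (hA.eigenvalues_nonneg i)]

open Polynomial in
private lemma aeval_intertwine {m : ℕ} (C M N : Matrix (Fin m) (Fin m) ℂ)
    (h : C * M = N * C) (p : ℂ[X]) : C * aeval M p = aeval N p * C := by
  induction p using Polynomial.induction_on' with
  | add p q hp hq => simp [map_add, mul_add, add_mul, hp, hq]
  | monomial k a =>
    have hk : ∀ k : ℕ, C * M ^ k = N ^ k * C := by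
      intro k
      induction k with
      | zero => simp
      | succ k ih => rw [pow_succ, ← mul_assoc, ih, mul_assoc, h, pow_succ, mul_assoc]
    simp only [aeval_monomial]
    rw [← mul_assoc, show C * (algebraMap ℂ (Matrix (Fin m) (Fin m) ℂ)) a
        = (algebraMap ℂ (Matrix (Fin m) (Fin m) ℂ)) a * C from (Algebra.commutes a C).symm,
      mul_assoc, hk, ← mul_assoc]

open Polynomial in
private lemma aeval_eq_sqrt {m : ℕ} {A : Matrix (Fin m) (Fin m) ℂ} (hA : A.PosSemidef)
    (p : ℂ[X]) (hp : ∀ i, p.eval ((hA.1.eigenvalues i : ℝ) : ℂ) = (Real.sqrt (hA.1.eigenvalues i) : ℂ)) :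
    aeval A p = hA.sqrt := by
  set U : Matrix (Fin m) (Fin m) ℂ := (hA.1.eigenvectorUnitary : Matrix (Fin m) (Fin m) ℂ)
  have hU : U * star U = 1 := (Matrix.mem_unitaryGroup_iff).mp hA.1.eigenvectorUnitary.2
  have hU' : star U * U = 1 := (Matrix.mem_unitaryGroup_iff').mp hA.1.eigenvectorUnitary.2
  set D : Matrix (Fin m) (Fin m) ℂ := diagonal (RCLike.ofReal ∘ hA.1.eigenvalues)
  have hspec : A = U * D * star U := hA.1.spectral_theorem
  have h1 : star U * A = D * star U := by
    rw [hspec, ← mul_assoc, ← mul_assoc, hU', one_mul]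
  have h2 : star U * aeval A p = aeval D p * star U := aeval_intertwine _ _ _ h1 p
  have h3 : aeval A p = U * aeval D p * star U := by
    have := congrArg (fun B => U * B) h2
    simpa [← mul_assoc, hU] using this
  have hD : aeval D p = diagonal ((↑) ∘ Real.sqrt ∘ hA.1.eigenvalues) := by
    have : D = Matrix.diagonalAlgHom (α := ℂ) (n := Fin m) ℂ (RCLike.ofReal ∘ hA.1.eigenvalues) := rfl
    rw [this, aeval_algHom_apply, Matrix.diagonalAlgHom_apply]
    refine congrArg diagonal (funext fun i => ?_)
    have h4 : (aeval (RCLike.ofReal ∘ hA.1.eigenvalues : Fin m → ℂ) p) i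
        = aeval ((hA.1.eigenvalues i : ℝ) : ℂ) p :=
      (aeval_algHom_apply (Pi.evalAlgHom ℂ (fun _ => ℂ) i)
        (RCLike.ofReal ∘ hA.1.eigenvalues) p).symm
    rw [h4]
    simpa using hp i
  rw [h3, hD]
  rfl


/-- Intermediate identity in the proof of Proposition 6.2:
`(I + (I - x xᴴ)^{1/2} z (I - xᴴ x)^{-1/2} xᴴ)⁻¹
  = (I - x xᴴ)^{1/2} (I + z xᴴ)⁻¹ (I - x xᴴ)^{-1/2}`, and the matrix on the left is
invertible. -/
theorem siegel_disk_inverse_intermediate {n : ℕ} (hn : 0 < n)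
    (x z : Matrix (Fin n) (Fin n) ℂ)
    (h1 : (1 - x * xᴴ).PosDef) (h2 : (1 - xᴴ * x).PosDef)
    (hzu : IsUnit (1 + z * xᴴ)) :
    IsUnit (1 + h1.posSemidef.sqrt * z * (h2.posSemidef.sqrt)⁻¹ * xᴴ) ∧
    (1 + h1.posSemidef.sqrt * z * (h2.posSemidef.sqrt)⁻¹ * xᴴ)⁻¹ =
      h1.posSemidef.sqrt * (1 + z * xᴴ)⁻¹ * (h1.posSemidef.sqrt)⁻¹ := by
  set A := h1.posSemidef.sqrt with hAdef
  set B := h2.posSemidef.sqrt with hBdef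
  -- interpolating polynomial
  set s : Finset ℂ :=
    (Finset.univ.image (fun i => ((h1.posSemidef.1.eigenvalues i : ℝ) : ℂ))) ∪
    (Finset.univ.image (fun i => ((h2.posSemidef.1.eigenvalues i : ℝ) : ℂ))) with hs
  set f : ℂ → ℂ := fun c => ((Real.sqrt c.re : ℝ) : ℂ) with hf
  set p : Polynomial ℂ := Lagrange.interpolate s id f with hpdef
  have hinj : Set.InjOn (id : ℂ → ℂ) s := fun a _ b _ h => h
  have hevals : ∀ c ∈ s, p.eval c = f c := fun c hc => by
    simpa [hpdef] using Lagrange.eval_interpolate_at_node (v := id) (r := f) hinj hc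
  have hA : Polynomial.aeval (1 - x * xᴴ) p = A := by
    refine aeval_eq_sqrt h1.posSemidef p fun i => ?_
    have hm : ((h1.posSemidef.1.eigenvalues i : ℝ) : ℂ) ∈ s := by
      apply Finset.mem_union_left
      exact Finset.mem_image_of_mem _ (Finset.mem_univ i)
    rw [hevals _ hm]
    simp [hf]
  have hB : Polynomial.aeval (1 - xᴴ * x) p = B := by
    refine aeval_eq_sqrt h2.posSemidef p fun i => ?_
    have hm : ((h2.posSemidef.1.eigenvalues i : ℝ) : ℂ) ∈ s := by
      apply Finset.mem_union_right
      exact Finset.mem_image_of_mem _ (Finset.mem_univ i)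
    rw [hevals _ hm]
    simp [hf]
  have hint : xᴴ * (1 - x * xᴴ) = (1 - xᴴ * x) * xᴴ := by noncomm_ring
  have hxA : xᴴ * A = B * xᴴ := by
    rw [← hA, ← hB]; exact aeval_intertwine _ _ _ hint p
  -- invertibility of A and B
  have hAu : IsUnit A := by
    rw [Matrix.isUnit_iff_isUnit_det]
    have : A.det * A.det = (1 - x * xᴴ).det := by
      rw [← Matrix.det_mul, h1.posSemidef.sqrt_mul_self]
    exact isUnit_of_mul_isUnit_left (this ▸ (Matrix.isUnit_iff_isUnit_det _).mp h1.isUnit)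
  have hBu : IsUnit B := by
    rw [Matrix.isUnit_iff_isUnit_det]
    have : B.det * B.det = (1 - xᴴ * x).det := by
      rw [← Matrix.det_mul, h2.posSemidef.sqrt_mul_self]
    exact isUnit_of_mul_isUnit_left (this ▸ (Matrix.isUnit_iff_isUnit_det _).mp h2.isUnit)
  have hAd : IsUnit A.det := (Matrix.isUnit_iff_isUnit_det _).mp hAu
  have hBd : IsUnit B.det := (Matrix.isUnit_iff_isUnit_det _).mp hBu
  have hkey : B⁻¹ * xᴴ = xᴴ * A⁻¹ := by
    calc B⁻¹ * xᴴ = B⁻¹ * xᴴ * (A * A⁻¹) := by rw [Matrix.mul_nonsing_inv _ hAd, mul_one]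
    _ = B⁻¹ * (xᴴ * A) * A⁻¹ := by noncomm_ring
    _ = B⁻¹ * (B * xᴴ) * A⁻¹ := by rw [hxA]
    _ = (B⁻¹ * B) * (xᴴ * A⁻¹) := by noncomm_ring
    _ = xᴴ * A⁻¹ := by rw [Matrix.nonsing_inv_mul _ hBd, one_mul]
  have hconj : 1 + A * z * B⁻¹ * xᴴ = A * (1 + z * xᴴ) * A⁻¹ := by
    have h5 : A * z * B⁻¹ * xᴴ = A * (z * xᴴ) * A⁻¹ := by
      calc A * z * B⁻¹ * xᴴ = A * z * (B⁻¹ * xᴴ) := by rw [mul_assoc]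
      _ = A * z * (xᴴ * A⁻¹) := by rw [hkey]
      _ = A * (z * xᴴ) * A⁻¹ := by noncomm_ring
    rw [mul_add, add_mul, mul_one, Matrix.mul_nonsing_inv _ hAd, h5]
  constructor
  · rw [hconj]
    exact (hAu.mul hzu).mul (Matrix.isUnit_nonsing_inv_iff.mpr hAu)
  · rw [hconj, Matrix.mul_inv_rev, Matrix.mul_inv_rev,
      Matrix.nonsing_inv_nonsing_inv _ hAd, ← mul_assoc]
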